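/- Let A ∈ GL(2,ℂ) with |det A| = 1. By polar decomposition there exist unit vectors u_A⁺ ⊥ u_A⁻ and v_A⁺ ⊥ v_A⁻ with A u_A⁺ = ‖A‖ v_A⁺ and A u_A⁻ = ‖A‖⁻¹ v_A⁻. Then for any A, B with |det A| = |det B| = 1 one has |B u_{AB}⁻ ∧ u_A⁻| ≤ ‖A‖⁻² ‖B‖, where u ∧ v denotes the 2×2 determinant of (u, v). -/

import Mathlib

set_option maxHeartbeats 1600000


/-- The wedge (2×2 determinant) of two vectors in ℂ². -/
noncomputable def wedge (u v : Fin 2 → ℂ) : ℂ := u 0 * v 1 - u 1 * v 0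

/-- Operator norm of a 2×2 complex matrix w.r.t. the Euclidean norm on ℂ². -/
noncomputable def opNorm (A : Matrix (Fin 2) (Fin 2) ℂ) : ℝ :=
  ‖Matrix.toEuclideanCLM (𝕜 := ℂ) A‖

/-- `IsSVD A u⁺ u⁻ v⁺ v⁻` records the data coming from the polar (singular value)
decomposition of a matrix `A` with `|det A| = 1`:  orthonormal pairs `u⁺ ⊥ u⁻`,
`v⁺ ⊥ v⁻` of unit vectors with `A u⁺ = ‖A‖ v⁺` and `A u⁻ = ‖A‖⁻¹ v⁻`. -/
def IsSVD (A : Matrix (Fin 2) (Fin 2) ℂ)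
    (up um vp vm : EuclideanSpace ℂ (Fin 2)) : Prop :=
  ‖up‖ = 1 ∧ ‖um‖ = 1 ∧ ‖vp‖ = 1 ∧ ‖vm‖ = 1 ∧
    inner (𝕜 := ℂ) up um = (0 : ℂ) ∧ inner (𝕜 := ℂ) vp vm = (0 : ℂ) ∧
    A.mulVec up = (opNorm A : ℂ) • (vp : Fin 2 → ℂ) ∧
    A.mulVec um = ((opNorm A)⁻¹ : ℂ) • (vm : Fin 2 → ℂ)

/-- Identity map recasting a plain vector as a Euclidean-space vector. -/
def toES (x : Fin 2 → ℂ) : EuclideanSpace ℂ (Fin 2) := WithLp.toLp 2 x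

lemma toES_smul (c : ℂ) (x : Fin 2 → ℂ) : toES (c • x) = c • toES x := rfl

lemma toES_apply (x : EuclideanSpace ℂ (Fin 2)) : toES x = x := rfl

lemma toES_clm (M : Matrix (Fin 2) (Fin 2) ℂ) (x : EuclideanSpace ℂ (Fin 2)) :
    toES (M.mulVec x) = Matrix.toEuclideanCLM (𝕜 := ℂ) M x := rfl

lemma wedge_mulVec (M : Matrix (Fin 2) (Fin 2) ℂ) (u v : Fin 2 → ℂ) :
    wedge (M.mulVec u) (M.mulVec v) = M.det * wedge u v := by
  simp [wedge, Matrix.mulVec, dotProduct, Matrix.det_fin_two, Fin.sum_univ_two]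
  ring

lemma wedge_smul_smul (c d : ℂ) (u v : Fin 2 → ℂ) :
    wedge (c • u) (d • v) = c * d * wedge u v := by
  simp [wedge, Pi.smul_apply, smul_eq_mul]; ring

lemma norm_sq_eq (z : EuclideanSpace ℂ (Fin 2)) :
    ‖z‖ ^ 2 = Complex.normSq (z 0) + Complex.normSq (z 1) := by
  rw [EuclideanSpace.norm_eq, Real.sq_sqrt (by positivity)]
  simp [Fin.sum_univ_two, Complex.normSq_eq_norm_sq]

lemma abs_wedge_le (u v : EuclideanSpace ℂ (Fin 2)) :
    ‖wedge u v‖ ≤ ‖u‖ * ‖v‖ := by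
  have h1 : ‖wedge u v‖ ≤
      ‖u 0‖ * ‖v 1‖ + ‖u 1‖ * ‖v 0‖ := by
    simpa [wedge, norm_mul] using norm_sub_le (u 0 * v 1) (u 1 * v 0)
  have hu := norm_sq_eq u
  have hv := norm_sq_eq v
  have hnu : 0 ≤ ‖u‖ := norm_nonneg _
  have hnv : 0 ≤ ‖v‖ := norm_nonneg _
  have e0 : Complex.normSq (u 0) = ‖u 0‖ ^ 2 := Complex.normSq_eq_norm_sq _
  have e1 : Complex.normSq (u 1) = ‖u 1‖ ^ 2 := Complex.normSq_eq_norm_sq _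
  have e2 : Complex.normSq (v 0) = ‖v 0‖ ^ 2 := Complex.normSq_eq_norm_sq _
  have e3 : Complex.normSq (v 1) = ‖v 1‖ ^ 2 := Complex.normSq_eq_norm_sq _
  rw [e0, e1] at hu; rw [e2, e3] at hv
  nlinarith [sq_nonneg (‖u 0‖ * ‖v 0‖ -
      ‖u 1‖ * ‖v 1‖),
    sq_nonneg (‖u‖ * ‖v‖ - (‖u 0‖ * ‖v 1‖ +
      ‖u 1‖ * ‖v 0‖)),
    mul_nonneg hnu hnv, norm_nonneg (u 0), norm_nonneg (u 1),
    norm_nonneg (v 0), norm_nonneg (v 1)]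

lemma opNorm_pos (M : Matrix (Fin 2) (Fin 2) ℂ) (h : M.det ≠ 0) : 0 < opNorm M := by
  rw [opNorm, norm_pos_iff]
  intro h0
  apply h
  have hM : M = 0 := by
    calc M = (Matrix.toEuclideanCLM (n := Fin 2) (𝕜 := ℂ)).symm
          (Matrix.toEuclideanCLM (n := Fin 2) (𝕜 := ℂ) M) := by
            rw [StarAlgEquiv.symm_apply_apply]
      _ = 0 := by rw [h0, map_zero]
  rw [hM]; simp

lemma norm_mulVec_le (M : Matrix (Fin 2) (Fin 2) ℂ) (x : EuclideanSpace ℂ (Fin 2)) :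
    ‖toES (M.mulVec x)‖ ≤ opNorm M * ‖x‖ := by
  rw [toES_clm]
  exact (Matrix.toEuclideanCLM (𝕜 := ℂ) M).le_opNorm x

/-- lower bound: `‖z‖² ≤ ‖M‖ ‖z‖ ‖Mz‖` when `|det M| = 1`. -/
lemma sq_norm_le (M : Matrix (Fin 2) (Fin 2) ℂ) (hM : ‖M.det‖ = 1)
    (z : EuclideanSpace ℂ (Fin 2)) :
    ‖z‖ ^ 2 ≤ opNorm M * ‖z‖ * ‖toES (M.mulVec z)‖ := by
  set y : EuclideanSpace ℂ (Fin 2) := toES ![-(starRingEnd ℂ (z 1)), starRingEnd ℂ (z 0)] with hy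
  have hyz : wedge z y = ((‖z‖ ^ 2 : ℝ) : ℂ) := by
    have h0 : wedge z y = z 0 * starRingEnd ℂ (z 0) + z 1 * starRingEnd ℂ (z 1) := by
      show z 0 * y 1 - z 1 * y 0 = _
      rw [hy]
      show z 0 * starRingEnd ℂ (z 0) - z 1 * -(starRingEnd ℂ (z 1)) = _
      ring
    rw [h0, Complex.mul_conj, Complex.mul_conj, norm_sq_eq]
    push_cast
    ring
  have hyn : ‖y‖ = ‖z‖ := by
    have h1 := norm_sq_eq y
    have hz := norm_sq_eq z
    have hy0 : y 0 = -(starRingEnd ℂ (z 1)) := rfl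
    have hy1 : y 1 = starRingEnd ℂ (z 0) := rfl
    rw [hy0, hy1] at h1
    have h2 : ‖y‖ ^ 2 = ‖z‖ ^ 2 := by
      rw [h1, hz]
      simp [Complex.normSq_conj]
      ring
    nlinarith [norm_nonneg y, norm_nonneg z]
  have key : ‖wedge (M.mulVec z) (M.mulVec y)‖ = ‖z‖ ^ 2 := by
    rw [wedge_mulVec, norm_mul, hM, one_mul, hyz, Complex.norm_real, Real.norm_eq_abs,
      abs_of_nonneg (by positivity)]
  have hle : ‖wedge (M.mulVec z) (M.mulVec y)‖ ≤
      ‖toES (M.mulVec z)‖ * ‖toES (M.mulVec y)‖ := abs_wedge_le (toES (M.mulVec z)) (toES (M.mulVec y))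
  have hMy : ‖toES (M.mulVec y)‖ ≤ opNorm M * ‖z‖ := by
    rw [← hyn]; exact norm_mulVec_le M y
  have hMz : 0 ≤ ‖toES (M.mulVec z)‖ := norm_nonneg _
  calc ‖z‖ ^ 2 = ‖wedge (M.mulVec z) (M.mulVec y)‖ := key.symm
    _ ≤ ‖toES (M.mulVec z)‖ * ‖toES (M.mulVec y)‖ := hle
    _ ≤ ‖toES (M.mulVec z)‖ * (opNorm M * ‖z‖) := mul_le_mul_of_nonneg_left hMy hMz
    _ = opNorm M * ‖z‖ * ‖toES (M.mulVec z)‖ := by ring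

theorem stmt6 (A B : Matrix (Fin 2) (Fin 2) ℂ)
    (hA : ‖A.det‖ = 1) (hB : ‖B.det‖ = 1)
    (uAp uAm vAp vAm uABp uABm vABp vABm : EuclideanSpace ℂ (Fin 2))
    (hSVDA : IsSVD A uAp uAm vAp vAm)
    (hSVDAB : IsSVD (A * B) uABp uABm vABp vABm) :
    ‖wedge (B.mulVec uABm) uAm‖ ≤ (opNorm A)⁻¹ ^ 2 * opNorm B := by
  obtain ⟨hup, hum, hvp, hvm, -, -, hAp, hAm⟩ := hSVDA
  obtain ⟨hup', hum', hvp', hvm', -, -, hABp, hABm⟩ := hSVDAB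
  have hdetA : A.det ≠ 0 := fun h => by simp [h] at hA
  have hdetB : B.det ≠ 0 := fun h => by simp [h] at hB
  have hdetAB : ‖(A * B).det‖ = 1 := by
    rw [Matrix.det_mul, norm_mul, hA, hB, one_mul]
  have hdetAB' : (A * B).det ≠ 0 := fun h => by simp [h] at hdetAB
  set s := opNorm A with hs
  set t := opNorm B with ht
  set r := opNorm (A * B) with hr
  have hspos : 0 < s := opNorm_pos A hdetA
  have htpos : 0 < t := opNorm_pos B hdetB
  have hrpos : 0 < r := opNorm_pos (A * B) hdetAB'
  -- main bound : |wedge (B uABm) uAm| ≤ r⁻¹ * s⁻¹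
  have hAw : A.mulVec (B.mulVec uABm) = ((r : ℂ))⁻¹ • (vABm : Fin 2 → ℂ) := by
    rw [Matrix.mulVec_mulVec]; exact hABm
  have key : ‖wedge (B.mulVec uABm) uAm‖ ≤ r⁻¹ * s⁻¹ := by
    have h1 : wedge (A.mulVec (B.mulVec uABm)) (A.mulVec uAm) =
        A.det * wedge (B.mulVec uABm) uAm := wedge_mulVec A _ _
    rw [hAw, hAm, wedge_smul_smul] at h1
    have h2 := congrArg (‖·‖) h1
    simp only [norm_mul, norm_inv, Complex.norm_real, Real.norm_eq_abs, hA, one_mul,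
      abs_of_nonneg hspos.le, abs_of_nonneg hrpos.le] at h2
    rw [← h2]
    have h3 : ‖wedge vABm vAm‖ ≤ 1 := by
      have := abs_wedge_le vABm vAm
      rwa [hvm', hvm, one_mul] at this
    calc r⁻¹ * s⁻¹ * ‖wedge vABm vAm‖ ≤ r⁻¹ * s⁻¹ * 1 := by
          apply mul_le_mul_of_nonneg_left h3
          positivity
      _ = r⁻¹ * s⁻¹ := by ring
  -- second bound : s ≤ r * t
  have hsrt : s ≤ r * t := by
    set x₀ : EuclideanSpace ℂ (Fin 2) := toES (B⁻¹.mulVec uAp) with hx₀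
    have hBx₀ : B.mulVec x₀ = (uAp : Fin 2 → ℂ) := by
      show B.mulVec (B⁻¹.mulVec uAp) = _
      rw [Matrix.mulVec_mulVec, Matrix.mul_nonsing_inv B (Ne.isUnit hdetB), Matrix.one_mulVec]
    have hx₀le : ‖x₀‖ ≤ t := by
      have h := sq_norm_le B hB x₀
      have hBx : ‖toES (B.mulVec x₀)‖ = 1 := by
        rw [hBx₀, toES_apply, hup]
      rw [hBx, mul_one] at h
      nlinarith [norm_nonneg x₀]
    have hABx₀ : (A * B).mulVec x₀ = (s : ℂ) • (vAp : Fin 2 → ℂ) := by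
      rw [← Matrix.mulVec_mulVec, hBx₀]; exact hAp
    have hnorm : ‖toES ((A * B).mulVec x₀)‖ = s := by
      rw [hABx₀, toES_smul, toES_apply, norm_smul, hvp, mul_one, Complex.norm_real,
        Real.norm_eq_abs, abs_of_nonneg hspos.le]
    calc s = ‖toES ((A * B).mulVec x₀)‖ := hnorm.symm
      _ ≤ r * ‖x₀‖ := norm_mulVec_le (A * B) x₀
      _ ≤ r * t := mul_le_mul_of_nonneg_left hx₀le hrpos.le
  -- combine
  have hfinal : r⁻¹ * s⁻¹ ≤ s⁻¹ ^ 2 * t := by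
    have h1 : s * s⁻¹ = 1 := mul_inv_cancel₀ hspos.ne'
    have h2 : r * r⁻¹ = 1 := mul_inv_cancel₀ hrpos.ne'
    have h3 := mul_le_mul_of_nonneg_right hsrt
      (by positivity : (0:ℝ) ≤ r⁻¹ * s⁻¹ * s⁻¹)
    calc r⁻¹ * s⁻¹ = s * (r⁻¹ * s⁻¹ * s⁻¹) := by
          rw [show s * (r⁻¹ * s⁻¹ * s⁻¹) = s * s⁻¹ * (r⁻¹ * s⁻¹) by ring, h1, one_mul]
      _ ≤ r * t * (r⁻¹ * s⁻¹ * s⁻¹) := h3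
      _ = s⁻¹ ^ 2 * t := by
          rw [show r * t * (r⁻¹ * s⁻¹ * s⁻¹) = r * r⁻¹ * (t * (s⁻¹ * s⁻¹)) by ring, h2, one_mul]
          ring
  exact key.trans hfinal
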